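/- Let D be a distribution on X × {0,1} with p = Pr_{(x,y)∼D}[y = 1], let f : X → {0,1}, and let k ≥ 1. Let (x_1,y_1),…,(x_k,y_k) be i.i.d. draws from D and α = (1/k)·Σ_{j=1}^k y_j. Then E[((1/k)·Σ_{j=1}^k f(x_j) − α)²] = (1/k)·L(f) + ((k−1)/k)·(E_{(x,y)∼D}[f(x)] − p)², where L(f) = Pr_{(x,y)∼D}[f(x) ≠ y]. -/

import Mathlib

open MeasureTheory Finset
open scoped ENNReal NNReal

noncomputable section

namespace LLP

/-- Real value of a Boolean label/prediction (`0` or `1`). -/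
def bval (b : Bool) : ℝ := if b then 1 else 0

/-- Label proportion `α` of a bag of `k` labeled examples. -/
def labelProp {X : Type*} {k : ℕ} (bag : Fin k → X × Bool) : ℝ :=
  (∑ j, bval (bag j).2) / (k : ℝ)

/-- Average prediction `(1/k)·Σ_j f(x_j)` of `f` on a bag. -/
def predProp {X : Type*} {k : ℕ} (f : X → Bool) (bag : Fin k → X × Bool) : ℝ :=
  (∑ j, bval (f (bag j).1)) / (k : ℝ)

/-- Instance-level classification loss `L(f) = Pr_{(x,y)∼D}[f(x) ≠ y]`. -/
def err {X : Type*} [MeasurableSpace X] (D : Measure (X × Bool)) (f : X → Bool) : ℝ :=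
  (D {p | f p.1 ≠ p.2}).toReal

/-- `S` is shattered by the Boolean-valued class `F`. -/
def Shatters {Z : Type*} (F : Set (Z → Bool)) (S : Finset Z) : Prop :=
  ∀ T ⊆ S, ∃ f ∈ F, ∀ z ∈ S, (f z = true ↔ z ∈ T)

/-- The VC dimension of `F` is at most `d`. -/
def VCDimLE {Z : Type*} (F : Set (Z → Bool)) (d : ℕ) : Prop :=
  ∀ S : Finset Z, Shatters F S → S.card ≤ d

/-- Joint distribution of `n` i.i.d. bags, each consisting of `k` i.i.d. draws from `D`. -/
def bagMeasure {X : Type*} [MeasurableSpace X] (D : Measure (X × Bool)) (n k : ℕ) :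
    Measure (Fin n → Fin k → X × Bool) :=
  Measure.pi fun _ => Measure.pi fun _ => D

/-- Empirical proportional (0-1) risk: fraction of bags whose predicted proportion
mismatches the observed label proportion. -/
def empPM {X : Type*} {n k : ℕ} (f : X → Bool) (ω : Fin n → Fin k → X × Bool) : ℝ :=
  (∑ i, if predProp f (ω i) = labelProp (ω i) then (0 : ℝ) else 1) / (n : ℝ)

/-- Empirical proportional square loss. -/
def empSQ {X : Type*} {n k : ℕ} (f : X → Bool) (ω : Fin n → Fin k → X × Bool) : ℝ :=
  (∑ i, (predProp f (ω i) - labelProp (ω i)) ^ 2) / (n : ℝ)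

/-- The EasyLLP estimate of the 0-1 loss on a single bag, using marginal label
proportion `p`. -/
def ellEZ {X : Type*} {k : ℕ} (p : ℝ) (f : X → Bool) (bag : Fin k → X × Bool) : ℝ :=
  ((k : ℝ) * (labelProp bag - p) + p) * (1 - predProp f bag)
    + ((k : ℝ) * (p - labelProp bag) + (1 - p)) * predProp f bag

/-- Marginal label proportion `p = Pr[y = 1]`. -/
def labelP {X : Type*} [MeasurableSpace X] (D : Measure (X × Bool)) : ℝ :=
  (D {q | q.2 = true}).toReal

end LLP

namespace LLP

/-- expectation of the proportional square loss, Eq. (5).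
For a bag of `k ≥ 1` i.i.d. draws from `D`,
`E[((1/k)·Σ_j f(x_j) − α)²] = (1/k)·L(f) + ((k−1)/k)·(E[f(x)] − p)²`. -/
theorem core
    (X : Type*) [MeasurableSpace X] (D : Measure (X × Bool)) [IsProbabilityMeasure D]
    (f : X → Bool) (hf : Measurable f) (k : ℕ) (hk : 1 ≤ k) :
    ∫ ω : Fin k → X × Bool, (∑ j, (bval (f (ω j).1) - bval (ω j).2)) ^ 2
        ∂(Measure.pi fun _ : Fin k => D) =
      (k : ℝ) * err D f +
        (k : ℝ) * ((k : ℝ) - 1) * ((∫ q, bval (f q.1) ∂D) - labelP D) ^ 2 := by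
  letI : MeasureSpace (X × Bool) := ⟨D⟩
  have hvol : (volume : Measure (X × Bool)) = D := rfl
  set g : X × Bool → ℝ := fun q => bval (f q.1) - bval q.2 with hgdef
  have hgmeas : Measurable g := by
    apply Measurable.sub
    · exact (Measurable.of_discrete (f := bval)).comp (hf.comp measurable_fst)
    · exact (Measurable.of_discrete (f := bval)).comp measurable_snd
  have hgbound : ∀ q, ‖g q‖ ≤ 1 := by
    intro q
    simp only [hgdef, bval, Real.norm_eq_abs]
    rcases f q.1 <;> rcases q.2 <;> norm_num
  have hgint : Integrable g D :=
    (integrable_const (1:ℝ)).mono' hgmeas.aestronglyMeasurable (ae_of_all _ hgbound)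
  have hg2int : Integrable (fun q => g q * g q) D := by
    refine (integrable_const (1:ℝ)).mono' (hgmeas.mul hgmeas).aestronglyMeasurable (ae_of_all _ ?_)
    intro q
    rw [norm_mul]
    nlinarith [hgbound q, norm_nonneg (g q)]
  have hg2 : ∫ q, g q * g q ∂D = err D f := by
    have hs : MeasurableSet {p : X × Bool | f p.1 ≠ p.2} :=
      (measurableSet_eq_fun (hf.comp measurable_fst) measurable_snd).compl
    have he : (fun q => g q * g q)
        = Set.indicator {p : X × Bool | f p.1 ≠ p.2} (fun _ => (1:ℝ)) := by
      funext q
      rcases hq1 : f q.1 <;> rcases hq2 : q.2 <;>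
        simp [hgdef, bval, Set.indicator, hq1, hq2]
    rw [he, integral_indicator_const _ hs, err]
    simp [measureReal_def]
  have hm : ∫ q, g q ∂D = (∫ q, bval (f q.1) ∂D) - labelP D := by
    have hsnd : (fun q : X × Bool => bval q.2)
        = Set.indicator {q : X × Bool | q.2 = true} (fun _ => (1:ℝ)) := by
      funext q
      rcases hq : q.2 <;> simp [bval, Set.indicator, hq]
    have hint1 : Integrable (fun q : X × Bool => bval (f q.1)) D := by
      refine (integrable_const (1:ℝ)).mono'
        (((Measurable.of_discrete (f := bval)).comp (hf.comp measurable_fst)).aestronglyMeasurable)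
        (ae_of_all _ ?_)
      intro q; rcases f q.1 <;> simp [bval]
    have hint2 : Integrable (fun q : X × Bool => bval q.2) D := by
      refine (integrable_const (1:ℝ)).mono'
        (((Measurable.of_discrete (f := bval)).comp measurable_snd).aestronglyMeasurable)
        (ae_of_all _ ?_)
      intro q; rcases q.2 <;> simp [bval]
    have hs2 : MeasurableSet {q : X × Bool | q.2 = true} :=
      measurable_snd (measurableSet_singleton true)
    rw [hgdef]
    rw [integral_sub hint1 hint2, hsnd, integral_indicator_const _ hs2, labelP]
    simp [measureReal_def]
  set m : ℝ := (∫ q, bval (f q.1) ∂D) - labelP D with hmdef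
  have hpi : (Measure.pi fun _ : Fin k => D) = (volume : Measure (Fin k → X × Bool)) :=
    (volume_pi).symm
  -- per-pair integral
  have key : ∀ i j : Fin k, (∫ ω : Fin k → X × Bool, g (ω i) * g (ω j)
      ∂(Measure.pi fun _ : Fin k => D)) = if i = j then err D f else m ^ 2 := by
    intro i j
    have hrw : (fun ω : Fin k → X × Bool => g (ω i) * g (ω j))
        = fun ω => ∏ l, ((fun x => (if l = i then g x else 1) * (if l = j then g x else 1)) (ω l)) := by
      funext ω
      rw [Finset.prod_mul_distrib]
      congr 1
      · rw [Finset.prod_ite_eq' Finset.univ i (fun l => g (ω l))]; simp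
      · rw [Finset.prod_ite_eq' Finset.univ j (fun l => g (ω l))]; simp
    rw [hrw, hpi, integral_fintype_prod_volume_eq_prod (𝕜 := ℝ)
      (fun l x => (if l = i then g x else 1) * (if l = j then g x else 1))]
    by_cases hij : i = j
    · subst hij
      have h1 : ∀ l : Fin k, (∫ x, (if l = i then g x else 1) * (if l = i then g x else 1))
          = if l = i then err D f else 1 := by
        intro l
        by_cases hl : l = i
        · simp only [hl, if_pos rfl]
          exact hg2
        · simp [hl]
      rw [Finset.prod_congr rfl (fun l _ => h1 l),
        Finset.prod_ite_eq' Finset.univ i (fun _ => err D f)]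
      simp
    · have h1 : ∀ l : Fin k, (∫ x, (if l = i then g x else 1) * (if l = j then g x else 1))
          = if l = i then m else if l = j then m else 1 := by
        intro l
        by_cases hl : l = i
        · subst hl
          have hlj : l ≠ j := hij
          simp only [if_pos rfl, if_neg hlj, mul_one]
          exact hm
        · by_cases hl2 : l = j
          · subst hl2
            simp only [if_neg hl, if_pos rfl, one_mul]
            exact hm
          · simp [hl, hl2]
      rw [Finset.prod_congr rfl (fun l _ => h1 l)]
      have : ∏ l : Fin k, (if l = i then m else if l = j then m else 1) = m * m := by
        rw [← Finset.prod_subset (Finset.subset_univ ({i, j} : Finset (Fin k)))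
          (by intro x _ hx; simp only [Finset.mem_insert, Finset.mem_singleton, not_or] at hx
              simp [hx.1, hx.2]),
          Finset.prod_pair hij]
        simp [hij]
      rw [this, if_neg hij, sq]
  -- expand square of sum
  have hexp : ∀ ω : Fin k → X × Bool,
      (∑ j, g (ω j)) ^ 2 = ∑ i, ∑ j, g (ω i) * g (ω j) := by
    intro ω
    rw [sq, Finset.sum_mul_sum]
  have hintpair : ∀ i j : Fin k, Integrable
      (fun ω : Fin k → X × Bool => g (ω i) * g (ω j)) (Measure.pi fun _ : Fin k => D) := by
    intro i j
    have hrw : (fun ω : Fin k → X × Bool => g (ω i) * g (ω j))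
        = fun ω => ∏ l, ((fun x => (if l = i then g x else 1) * (if l = j then g x else 1)) (ω l)) := by
      funext ω
      rw [Finset.prod_mul_distrib]
      congr 1
      · rw [Finset.prod_ite_eq' Finset.univ i (fun l => g (ω l))]; simp
      · rw [Finset.prod_ite_eq' Finset.univ j (fun l => g (ω l))]; simp
    rw [hrw, hpi]
    apply Integrable.fintype_prod (f := fun l x => (if l = i then g x else 1) * (if l = j then g x else 1))
    intro l
    by_cases hl : l = i
    · subst hl
      by_cases hl2 : l = j
      · subst hl2
        simp only [if_pos rfl]
        exact hg2int
      · simp only [if_pos rfl, if_neg hl2, mul_one]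
        exact hgint
    · by_cases hl2 : l = j
      · subst hl2
        simp only [if_neg hl, if_pos rfl, one_mul]
        exact hgint
      · simp only [if_neg hl, if_neg hl2, mul_one]
        exact integrable_const 1
  calc ∫ ω : Fin k → X × Bool, (∑ j, g (ω j)) ^ 2 ∂(Measure.pi fun _ : Fin k => D)
      = ∫ ω : Fin k → X × Bool, ∑ i, ∑ j, g (ω i) * g (ω j)
          ∂(Measure.pi fun _ : Fin k => D) := by
        congr 1; funext ω; exact hexp ω
    _ = ∑ i, ∑ j, ∫ ω : Fin k → X × Bool, g (ω i) * g (ω j)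
          ∂(Measure.pi fun _ : Fin k => D) := by
        rw [integral_finset_sum _ (fun i _ => integrable_finset_sum _ (fun j _ => hintpair i j))]
        exact Finset.sum_congr rfl fun i _ =>
          integral_finset_sum _ (fun j _ => hintpair i j)
    _ = ∑ i : Fin k, ∑ j : Fin k, (if i = j then err D f else m ^ 2) := by
        exact Finset.sum_congr rfl fun i _ => Finset.sum_congr rfl fun j _ => key i j
    _ = (k : ℝ) * err D f + (k : ℝ) * ((k : ℝ) - 1) * m ^ 2 := by
        have hrow : ∀ i : Fin k, (∑ j : Fin k, if i = j then err D f else m ^ 2)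
            = err D f + ((k : ℝ) - 1) * m ^ 2 := by
          intro i
          have hsplit : (∑ j : Fin k, if i = j then err D f else m ^ 2)
              = ∑ j : Fin k, ((if i = j then err D f - m ^ 2 else 0) + m ^ 2) := by
            refine Finset.sum_congr rfl fun j _ => ?_
            by_cases h : i = j <;> simp [h]
          rw [hsplit, Finset.sum_add_distrib, Finset.sum_ite_eq,
            if_pos (Finset.mem_univ i), Finset.sum_const, Finset.card_univ, Fintype.card_fin,
            nsmul_eq_mul]
          ring
        rw [Finset.sum_congr rfl (fun i _ => hrow i), Finset.sum_const, Finset.card_univ,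
          Fintype.card_fin, nsmul_eq_mul]
        ring
theorem prop_square_loss_expectation
    (X : Type*) [MeasurableSpace X] (D : Measure (X × Bool)) [IsProbabilityMeasure D]
    (f : X → Bool) (hf : Measurable f) (k : ℕ) (hk : 1 ≤ k) :
    ∫ bag, (predProp f bag - labelProp bag) ^ 2 ∂(Measure.pi fun _ : Fin k => D) =
      (1 / (k : ℝ)) * err D f +
        (((k : ℝ) - 1) / (k : ℝ)) * ((∫ q, bval (f q.1) ∂D) - labelP D) ^ 2 := by
  have hk0 : (k : ℝ) ≠ 0 := by
    have : (0:ℕ) < k := hk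
    positivity
  have hptw : ∀ bag : Fin k → X × Bool, (predProp f bag - labelProp bag) ^ 2
      = (∑ j, (bval (f (bag j).1) - bval (bag j).2)) ^ 2 / (k : ℝ) ^ 2 := by
    intro bag
    rw [predProp, labelProp, div_sub_div_same, ← Finset.sum_sub_distrib, div_pow]
  calc ∫ bag, (predProp f bag - labelProp bag) ^ 2 ∂(Measure.pi fun _ : Fin k => D)
      = ∫ bag, (∑ j, (bval (f (bag j).1) - bval (bag j).2)) ^ 2 / (k : ℝ) ^ 2
          ∂(Measure.pi fun _ : Fin k => D) := by
        congr 1; funext bag; exact hptw bag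
    _ = (∫ bag, (∑ j, (bval (f (bag j).1) - bval (bag j).2)) ^ 2
          ∂(Measure.pi fun _ : Fin k => D)) / (k : ℝ) ^ 2 := integral_div _ _
    _ = ((k : ℝ) * err D f +
          (k : ℝ) * ((k : ℝ) - 1) * ((∫ q, bval (f q.1) ∂D) - labelP D) ^ 2) / (k : ℝ) ^ 2 := by
        rw [core X D f hf k hk]
    _ = (1 / (k : ℝ)) * err D f +
          (((k : ℝ) - 1) / (k : ℝ)) * ((∫ q, bval (f q.1) ∂D) - labelP D) ^ 2 := by
        field_simp

end LLP
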